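/- The two-sided ideal of A generated by the elements x∗y + y∗x and x∗(y∗z) + y∗(z∗x) + z∗(x∗y), for x, y, z ∈ FreeMagma E, is equal to the two-sided ideal J' of A generated by the pre-Lie associator elements x·(y·z) − (x·y)·z − y·(x·z) + (y·x)·z together with the weighted anti-symmetry elements |x|·(x·y) + |y|·(y·x), for x, y, z ∈ FreeMagma E. -/

import Mathlib

/-- The additive extension of the degree function `d : E → ℕ` to the free magma. -/
def FreeMagma.mdeg {E : Type*} (d : E → ℕ) : FreeMagma E → ℕ
  | .of a => d a
  | .mul x y => FreeMagma.mdeg d x + FreeMagma.mdeg d y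

/-- The monomial corresponding to an element of the free magma, inside the free
non-unital non-associative algebra. -/
noncomputable def magmaMonomial {E : Type*} (z : FreeMagma E) :
    FreeNonUnitalNonAssocAlgebra ℚ E :=
  MonoidAlgebra.single z (1 : ℚ)

/-- The linear "degree rescaling" sending a monomial `z` to `|z| • z`. -/
noncomputable def degScale {E : Type*} (d : E → ℕ) (p : FreeNonUnitalNonAssocAlgebra ℚ E) :
    FreeNonUnitalNonAssocAlgebra ℚ E :=
  p.coeff.sum fun z c => MonoidAlgebra.single z ((FreeMagma.mdeg d z : ℚ) * c)

/-- The bilinear product `z ∗ w := |z| • (z · w)`, extended bilinearly from monomials. -/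
noncomputable def starProd {E : Type*} (d : E → ℕ)
    (p q : FreeNonUnitalNonAssocAlgebra ℚ E) : FreeNonUnitalNonAssocAlgebra ℚ E :=
  degScale d p * q

/-- A ℚ-submodule of the magma algebra which is stable under left and right
multiplication by arbitrary elements: a two-sided ideal. -/
def IsTwoSidedIdealSubmodule {E : Type*}
    (I : Submodule ℚ (FreeNonUnitalNonAssocAlgebra ℚ E)) : Prop :=
  ∀ a x : FreeNonUnitalNonAssocAlgebra ℚ E, x ∈ I → a * x ∈ I ∧ x * a ∈ I

/-- The smallest two-sided ideal (ℚ-submodule closed under left and right multiplication)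
containing a given set. -/
noncomputable def twoSidedIdealGen {E : Type*} (S : Set (FreeNonUnitalNonAssocAlgebra ℚ E)) :
    Submodule ℚ (FreeNonUnitalNonAssocAlgebra ℚ E) :=
  sInf {I | IsTwoSidedIdealSubmodule I ∧ S ⊆ I}

section Aux
variable {E : Type*} (d : E → ℕ)

lemma mm_mul (x y : FreeMagma E) :
    magmaMonomial x * magmaMonomial y = magmaMonomial (x * y) := by
  simp [magmaMonomial, MonoidAlgebra.single_mul_single]

lemma degScale_mm (x : FreeMagma E) :
    degScale d (magmaMonomial x) = (FreeMagma.mdeg d x : ℚ) • magmaMonomial x := by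
  rw [degScale, magmaMonomial, MonoidAlgebra.coeff_single, Finsupp.sum_single_index (by simp)]
  simp [Finsupp.smul_single]

lemma star_mm (x y : FreeMagma E) :
    starProd d (magmaMonomial x) (magmaMonomial y)
      = (FreeMagma.mdeg d x : ℚ) • magmaMonomial (x * y) := by
  rw [starProd, degScale_mm, smul_mul_assoc, mm_mul]

lemma star_smul (p : FreeNonUnitalNonAssocAlgebra ℚ E) (c : ℚ)
    (q : FreeNonUnitalNonAssocAlgebra ℚ E) :
    starProd d p (c • q) = c • starProd d p q := by
  rw [starProd, starProd, mul_smul_comm]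

lemma star_starr (x y z : FreeMagma E) :
    starProd d (magmaMonomial x) (starProd d (magmaMonomial y) (magmaMonomial z))
      = ((FreeMagma.mdeg d x : ℚ) * (FreeMagma.mdeg d y : ℚ)) •
          magmaMonomial (x * (y * z)) := by
  rw [star_mm, star_smul, star_mm, smul_smul, mul_comm]

lemma mdeg_pos (hd : ∀ a : E, 1 ≤ d a) : ∀ x : FreeMagma E, 1 ≤ FreeMagma.mdeg d x
  | .of a => hd a
  | .mul x y => le_trans (mdeg_pos hd x) (by simp [FreeMagma.mdeg])

end Aux

section IdealAux
variable {E : Type*}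

lemma subset_gen (S : Set (FreeNonUnitalNonAssocAlgebra ℚ E)) : S ⊆ twoSidedIdealGen S :=
  fun x hx => Submodule.mem_sInf.2 fun _ hI => hI.2 hx

lemma gen_isIdeal (S : Set (FreeNonUnitalNonAssocAlgebra ℚ E)) :
    IsTwoSidedIdealSubmodule (twoSidedIdealGen S) := by
  intro a x hx
  exact ⟨Submodule.mem_sInf.2 fun I hI => (hI.1 a x (Submodule.mem_sInf.1 hx I hI)).1,
    Submodule.mem_sInf.2 fun I hI => (hI.1 a x (Submodule.mem_sInf.1 hx I hI)).2⟩

lemma gen_le {S : Set (FreeNonUnitalNonAssocAlgebra ℚ E)}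
    {T : Submodule ℚ (FreeNonUnitalNonAssocAlgebra ℚ E)}
    (hT : IsTwoSidedIdealSubmodule T) (hS : S ⊆ T) : twoSidedIdealGen S ≤ T :=
  sInf_le ⟨hT, hS⟩

end IdealAux

section Main
variable {E : Type*} {d : E → ℕ}
  {T : Submodule ℚ (FreeNonUnitalNonAssocAlgebra ℚ E)} (hT : IsTwoSidedIdealSubmodule T)
  (hA : ∀ x y : FreeMagma E,
    (FreeMagma.mdeg d x : ℚ) • magmaMonomial (x * y) +
    (FreeMagma.mdeg d y : ℚ) • magmaMonomial (y * x) ∈ T)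

include hT hA

lemma hA_left (w x y : FreeMagma E) :
    (FreeMagma.mdeg d x : ℚ) • magmaMonomial (w * (x * y)) +
    (FreeMagma.mdeg d y : ℚ) • magmaMonomial (w * (y * x)) ∈ T := by
  have h := (hT (magmaMonomial w) _ (hA x y)).1
  rwa [mul_add, mul_smul_comm, mul_smul_comm, mm_mul, mm_mul] at h

lemma hA_right (x y w : FreeMagma E) :
    (FreeMagma.mdeg d x : ℚ) • magmaMonomial ((x * y) * w) +
    (FreeMagma.mdeg d y : ℚ) • magmaMonomial ((y * x) * w) ∈ T := by
  have h := (hT (magmaMonomial w) _ (hA x y)).2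
  rwa [add_mul, smul_mul_assoc, smul_mul_assoc, mm_mul, mm_mul] at h

end Main

lemma mdeg_mul {E : Type*} (d : E → ℕ) (x y : FreeMagma E) :
    FreeMagma.mdeg d (x * y) = FreeMagma.mdeg d x + FreeMagma.mdeg d y := rfl

section Main2
variable {E : Type*} {d : E → ℕ}
  {T : Submodule ℚ (FreeNonUnitalNonAssocAlgebra ℚ E)} (hT : IsTwoSidedIdealSubmodule T)
  (hA : ∀ x y : FreeMagma E,
    (FreeMagma.mdeg d x : ℚ) • magmaMonomial (x * y) +
    (FreeMagma.mdeg d y : ℚ) • magmaMonomial (y * x) ∈ T)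

include hT hA

/-- If the antisymmetry elements and the pre-Lie associators are in `T`, so is the Jacobi
element. -/
lemma jacobi_mem
    (hP : ∀ x y z : FreeMagma E,
      magmaMonomial (x * (y * z)) - magmaMonomial ((x * y) * z) -
      magmaMonomial (y * (x * z)) + magmaMonomial ((y * x) * z) ∈ T)
    (x y z : FreeMagma E) :
    ((FreeMagma.mdeg d x : ℚ) * (FreeMagma.mdeg d y : ℚ)) • magmaMonomial (x * (y * z)) +
    ((FreeMagma.mdeg d y : ℚ) * (FreeMagma.mdeg d z : ℚ)) • magmaMonomial (y * (z * x)) +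
    ((FreeMagma.mdeg d z : ℚ) * (FreeMagma.mdeg d x : ℚ)) • magmaMonomial (z * (x * y)) ∈ T := by
  set a := (FreeMagma.mdeg d x : ℚ)
  set b := (FreeMagma.mdeg d y : ℚ)
  set c := (FreeMagma.mdeg d z : ℚ)
  have u1 := hA_left hT hA y z x
  have u2 := hA z (x * y)
  rw [mdeg_mul, Nat.cast_add] at u2
  have u3 := hP x y z
  have u4 := hA_right hT hA x y z
  have key :
      (a * b) • magmaMonomial (x * (y * z)) + (b * c) • magmaMonomial (y * (z * x)) +
        (c * a) • magmaMonomial (z * (x * y))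
      = b • (c • magmaMonomial (y * (z * x)) + a • magmaMonomial (y * (x * z)))
        + a • (c • magmaMonomial (z * (x * y)) + (a + b) • magmaMonomial ((x * y) * z))
        + (a * b) • (magmaMonomial (x * (y * z)) - magmaMonomial ((x * y) * z) -
            magmaMonomial (y * (x * z)) + magmaMonomial ((y * x) * z))
        - a • (a • magmaMonomial ((x * y) * z) + b • magmaMonomial ((y * x) * z)) := by
    module
  rw [key]
  exact T.sub_mem (T.add_mem (T.add_mem (T.smul_mem b u1) (T.smul_mem a u2))
    (T.smul_mem (a * b) u3)) (T.smul_mem a u4)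

/-- Conversely, if the antisymmetry elements and Jacobi elements are in `T`, the pre-Lie
associator is. -/
lemma preLie_mem (hd : ∀ a : E, 1 ≤ d a)
    (hJ : ∀ x y z : FreeMagma E,
      ((FreeMagma.mdeg d x : ℚ) * (FreeMagma.mdeg d y : ℚ)) • magmaMonomial (x * (y * z)) +
      ((FreeMagma.mdeg d y : ℚ) * (FreeMagma.mdeg d z : ℚ)) • magmaMonomial (y * (z * x)) +
      ((FreeMagma.mdeg d z : ℚ) * (FreeMagma.mdeg d x : ℚ)) • magmaMonomial (z * (x * y)) ∈ T)
    (x y z : FreeMagma E) :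
    magmaMonomial (x * (y * z)) - magmaMonomial ((x * y) * z) -
      magmaMonomial (y * (x * z)) + magmaMonomial ((y * x) * z) ∈ T := by
  set a := (FreeMagma.mdeg d x : ℚ) with ha
  set b := (FreeMagma.mdeg d y : ℚ) with hb
  set c := (FreeMagma.mdeg d z : ℚ) with hc
  have hane : a ≠ 0 := by
    rw [ha]; exact_mod_cast Nat.pos_iff_ne_zero.1 (mdeg_pos d hd x)
  have hbne : b ≠ 0 := by
    rw [hb]; exact_mod_cast Nat.pos_iff_ne_zero.1 (mdeg_pos d hd y)
  have u1 := hA_left hT hA y z x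
  have u2 := hA z (x * y)
  rw [mdeg_mul, Nat.cast_add] at u2
  have u4 := hA_right hT hA x y z
  have uJ := hJ x y z
  have key :
      (a * b) • (magmaMonomial (x * (y * z)) - magmaMonomial ((x * y) * z) -
          magmaMonomial (y * (x * z)) + magmaMonomial ((y * x) * z))
      = ((a * b) • magmaMonomial (x * (y * z)) + (b * c) • magmaMonomial (y * (z * x)) +
          (c * a) • magmaMonomial (z * (x * y)))
        - b • (c • magmaMonomial (y * (z * x)) + a • magmaMonomial (y * (x * z)))
        - a • (c • magmaMonomial (z * (x * y)) + (a + b) • magmaMonomial ((x * y) * z))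
        + a • (a • magmaMonomial ((x * y) * z) + b • magmaMonomial ((y * x) * z)) := by
    module
  have hmem : (a * b) • (magmaMonomial (x * (y * z)) - magmaMonomial ((x * y) * z) -
      magmaMonomial (y * (x * z)) + magmaMonomial ((y * x) * z)) ∈ T := by
    rw [key]
    exact T.add_mem (T.sub_mem (T.sub_mem uJ (T.smul_mem b u1)) (T.smul_mem a u2))
      (T.smul_mem a u4)
  have := T.smul_mem ((a * b)⁻¹) hmem
  rwa [smul_smul, inv_mul_cancel₀ (mul_ne_zero hane hbne), one_smul] at this

end Main2

/-- The two-sided ideal generated by the `∗`-anti-symmetry and `∗`-Jacobi elements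
coincides with the two-sided ideal `J'` generated by the pre-Lie associators together
with the weighted anti-symmetry elements. -/
theorem star_lie_ideal_eq_preLie_weighted_ideal (E : Type*) (d : E → ℕ)
    (hd : ∀ a : E, 1 ≤ d a) :
    twoSidedIdealGen
      ({v | ∃ x y : FreeMagma E,
          v = starProd d (magmaMonomial x) (magmaMonomial y) +
              starProd d (magmaMonomial y) (magmaMonomial x)} ∪
       {v | ∃ x y z : FreeMagma E,
          v = starProd d (magmaMonomial x) (starProd d (magmaMonomial y) (magmaMonomial z)) +
              starProd d (magmaMonomial y) (starProd d (magmaMonomial z) (magmaMonomial x)) +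
              starProd d (magmaMonomial z) (starProd d (magmaMonomial x) (magmaMonomial y))}) =
    twoSidedIdealGen
      ({v | ∃ x y z : FreeMagma E,
          v = magmaMonomial x * (magmaMonomial y * magmaMonomial z) -
              (magmaMonomial x * magmaMonomial y) * magmaMonomial z -
              magmaMonomial y * (magmaMonomial x * magmaMonomial z) +
              (magmaMonomial y * magmaMonomial x) * magmaMonomial z} ∪
       {v | ∃ x y : FreeMagma E,
          v = (FreeMagma.mdeg d x : ℚ) • (magmaMonomial x * magmaMonomial y) +
              (FreeMagma.mdeg d y : ℚ) • (magmaMonomial y * magmaMonomial x)}) := by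
  set L : Set (FreeNonUnitalNonAssocAlgebra ℚ E) :=
      {v | ∃ x y : FreeMagma E,
          v = starProd d (magmaMonomial x) (magmaMonomial y) +
              starProd d (magmaMonomial y) (magmaMonomial x)} ∪
      {v | ∃ x y z : FreeMagma E,
          v = starProd d (magmaMonomial x) (starProd d (magmaMonomial y) (magmaMonomial z)) +
              starProd d (magmaMonomial y) (starProd d (magmaMonomial z) (magmaMonomial x)) +
              starProd d (magmaMonomial z) (starProd d (magmaMonomial x) (magmaMonomial y))}
      with hL
  set R : Set (FreeNonUnitalNonAssocAlgebra ℚ E) :=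
      {v | ∃ x y z : FreeMagma E,
          v = magmaMonomial x * (magmaMonomial y * magmaMonomial z) -
              (magmaMonomial x * magmaMonomial y) * magmaMonomial z -
              magmaMonomial y * (magmaMonomial x * magmaMonomial z) +
              (magmaMonomial y * magmaMonomial x) * magmaMonomial z} ∪
      {v | ∃ x y : FreeMagma E,
          v = (FreeMagma.mdeg d x : ℚ) • (magmaMonomial x * magmaMonomial y) +
              (FreeMagma.mdeg d y : ℚ) • (magmaMonomial y * magmaMonomial x)}
      with hR
  have hA_R : ∀ x y : FreeMagma E,
      (FreeMagma.mdeg d x : ℚ) • magmaMonomial (x * y) +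
      (FreeMagma.mdeg d y : ℚ) • magmaMonomial (y * x) ∈ twoSidedIdealGen R := by
    intro x y
    have h := subset_gen R (Or.inr ⟨x, y, rfl⟩)
    rwa [mm_mul, mm_mul] at h
  have hP_R : ∀ x y z : FreeMagma E,
      magmaMonomial (x * (y * z)) - magmaMonomial ((x * y) * z) -
      magmaMonomial (y * (x * z)) + magmaMonomial ((y * x) * z) ∈ twoSidedIdealGen R := by
    intro x y z
    have h := subset_gen R (Or.inl ⟨x, y, z, rfl⟩)
    simpa only [mm_mul, SetLike.mem_coe] using h
  have hA_L : ∀ x y : FreeMagma E,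
      (FreeMagma.mdeg d x : ℚ) • magmaMonomial (x * y) +
      (FreeMagma.mdeg d y : ℚ) • magmaMonomial (y * x) ∈ twoSidedIdealGen L := by
    intro x y
    have h := subset_gen L (Or.inl ⟨x, y, rfl⟩)
    rwa [star_mm, star_mm] at h
  have hJ_L : ∀ x y z : FreeMagma E,
      ((FreeMagma.mdeg d x : ℚ) * (FreeMagma.mdeg d y : ℚ)) • magmaMonomial (x * (y * z)) +
      ((FreeMagma.mdeg d y : ℚ) * (FreeMagma.mdeg d z : ℚ)) • magmaMonomial (y * (z * x)) +
      ((FreeMagma.mdeg d z : ℚ) * (FreeMagma.mdeg d x : ℚ)) • magmaMonomial (z * (x * y)) ∈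
        twoSidedIdealGen L := by
    intro x y z
    have h := subset_gen L (Or.inr ⟨x, y, z, rfl⟩)
    rwa [star_starr, star_starr, star_starr] at h
  apply le_antisymm
  · apply gen_le (gen_isIdeal R)
    rintro v (⟨x, y, rfl⟩ | ⟨x, y, z, rfl⟩)
    · rw [star_mm, star_mm]
      exact hA_R x y
    · rw [star_starr, star_starr, star_starr]
      exact jacobi_mem (gen_isIdeal R) hA_R hP_R x y z
  · apply gen_le (gen_isIdeal L)
    rintro v (⟨x, y, z, rfl⟩ | ⟨x, y, rfl⟩)
    · simp only [mm_mul]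
      exact preLie_mem (gen_isIdeal L) hA_L hd hJ_L x y z
    · rw [mm_mul, mm_mul]
      exact hA_L x y
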